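/- For every grid function ω : ZMod Nx × ZMod Ny → ℝ, (11/16)²·‖ω‖ ≤ ‖ℒ ω‖ ≤ ‖ω‖, where ℒ := L_x ∘ L_y; consequently the linear map ℒ on the space of grid functions is bijective. (Equivalently, ‖ℒ ω‖ ≤ ‖ω‖ ≤ ‖ℒ⁻¹ ω‖ ≤ (16/11)²·‖ω‖ for all ω.) -/

import Mathlib

open Finset

/-- A periodic grid function on the `Nx × Ny` staggered grid (periodicity is
automatic in the `ZMod` indexing).  The same index set represents
cell-centered, x-face and y-face values. -/
abbrev GridFn (Nx Ny : ℕ) := ZMod Nx × ZMod Ny → ℝ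

variable {Nx Ny : ℕ}

/-- Discrete `L²` inner product `(ω, σ) = ∑ᵢⱼ hx·hy·ωᵢⱼ·σᵢⱼ`. -/
noncomputable def gip [NeZero Nx] [NeZero Ny] (hx hy : ℝ) (ω σ : GridFn Nx Ny) : ℝ :=
  ∑ p : ZMod Nx × ZMod Ny, hx * hy * ω p * σ p

/-- Discrete `L²` norm. -/
noncomputable def gnorm [NeZero Nx] [NeZero Ny] (hx hy : ℝ) (ω : GridFn Nx Ny) : ℝ :=
  Real.sqrt (gip hx hy ω ω)

/-- `δ_x` mapping cell-centered functions to x-face functions. -/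
noncomputable def dxc (hx : ℝ) (ω : GridFn Nx Ny) : GridFn Nx Ny :=
  fun p => (ω (p.1 + 1, p.2) - ω p) / hx

/-- `δ_x` mapping x-face functions to cell-centered functions. -/
noncomputable def dxf (hx : ℝ) (ν : GridFn Nx Ny) : GridFn Nx Ny :=
  fun p => (ν p - ν (p.1 - 1, p.2)) / hx

/-- `δ_y` mapping cell-centered functions to y-face functions. -/
noncomputable def dyc (hy : ℝ) (ω : GridFn Nx Ny) : GridFn Nx Ny :=
  fun p => (ω (p.1, p.2 + 1) - ω p) / hy

/-- `δ_y` mapping y-face functions to cell-centered functions. -/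
noncomputable def dyf (hy : ℝ) (ν : GridFn Nx Ny) : GridFn Nx Ny :=
  fun p => (ν p - ν (p.1, p.2 - 1)) / hy

/-- Second difference `δ_x²`. -/
noncomputable def dxx (hx : ℝ) (ω : GridFn Nx Ny) : GridFn Nx Ny :=
  fun p => (ω (p.1 + 1, p.2) - 2 * ω p + ω (p.1 - 1, p.2)) / hx ^ 2

/-- Second difference `δ_y²`. -/
noncomputable def dyy (hy : ℝ) (ω : GridFn Nx Ny) : GridFn Nx Ny :=
  fun p => (ω (p.1, p.2 + 1) - 2 * ω p + ω (p.1, p.2 - 1)) / hy ^ 2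

/-- Compact operator `L_x = Id + (hx²/24)·δ_x²`. -/
noncomputable def opLx (hx : ℝ) (ω : GridFn Nx Ny) : GridFn Nx Ny :=
  fun p => ω p + hx ^ 2 / 24 * dxx hx ω p

/-- Compact operator `L_y = Id + (hy²/24)·δ_y²`. -/
noncomputable def opLy (hy : ℝ) (ω : GridFn Nx Ny) : GridFn Nx Ny :=
  fun p => ω p + hy ^ 2 / 24 * dyy hy ω p

/-- Compact operator `ℒ = L_x ∘ L_y`. -/
noncomputable def opLL (hx hy : ℝ) (ω : GridFn Nx Ny) : GridFn Nx Ny :=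
  opLx hx (opLy hy ω)

/-- Cubic interpolation operator `T_x` (cell-centered to x-face). -/
noncomputable def Tx (ω : GridFn Nx Ny) : GridFn Nx Ny :=
  fun p => (-ω (p.1 - 1, p.2) + 9 * ω p + 9 * ω (p.1 + 1, p.2) - ω (p.1 + 2, p.2)) / 16

/-- Cubic interpolation operator `T_y` (cell-centered to y-face). -/
noncomputable def Ty (ω : GridFn Nx Ny) : GridFn Nx Ny :=
  fun p => (-ω (p.1, p.2 - 1) + 9 * ω p + 9 * ω (p.1, p.2 + 1) - ω (p.1, p.2 + 2)) / 16

section Aux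

variable [NeZero Nx] [NeZero Ny]

/-- View a grid function as an element of Euclidean space. -/
noncomputable def toE (ω : GridFn Nx Ny) : EuclideanSpace ℝ (ZMod Nx × ZMod Ny) :=
  (WithLp.equiv 2 _).symm ω

lemma toE_norm (ω : GridFn Nx Ny) :
    ‖toE ω‖ = Real.sqrt (∑ p : ZMod Nx × ZMod Ny, (ω p) ^ 2) := by
  rw [EuclideanSpace.norm_eq]
  congr 1
  refine Finset.sum_congr rfl fun p _ => ?_
  rw [Real.norm_eq_abs, sq_abs]
  rfl

lemma norm_shiftx (ω : GridFn Nx Ny) (a : ZMod Nx) :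
    ‖toE (fun p : ZMod Nx × ZMod Ny => ω (p.1 + a, p.2))‖ = ‖toE ω‖ := by
  rw [toE_norm, toE_norm]
  congr 1
  exact Fintype.sum_equiv ((Equiv.addRight a).prodCongr (Equiv.refl (ZMod Ny))) _ _
    (fun p => rfl)

lemma norm_shifty (ω : GridFn Nx Ny) (b : ZMod Ny) :
    ‖toE (fun p : ZMod Nx × ZMod Ny => ω (p.1, p.2 + b))‖ = ‖toE ω‖ := by
  rw [toE_norm, toE_norm]
  congr 1
  exact Fintype.sum_equiv ((Equiv.refl (ZMod Nx)).prodCongr (Equiv.addRight b)) _ _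
    (fun p => rfl)

lemma toE_opLx (hx : ℝ) (hhx : hx ≠ 0) (ω : GridFn Nx Ny) :
    toE (opLx hx ω) = (11/12 : ℝ) • toE ω
      + (1/24 : ℝ) • toE (fun p : ZMod Nx × ZMod Ny => ω (p.1 + 1, p.2))
      + (1/24 : ℝ) • toE (fun p : ZMod Nx × ZMod Ny => ω (p.1 + (-1), p.2)) := by
  ext p
  simp only [toE, WithLp.equiv_symm_apply, PiLp.toLp_apply, PiLp.add_apply, PiLp.smul_apply, smul_eq_mul,
    opLx, dxx, sub_eq_add_neg]
  field_simp
  ring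

lemma toE_opLy (hy : ℝ) (hhy : hy ≠ 0) (ω : GridFn Nx Ny) :
    toE (opLy hy ω) = (11/12 : ℝ) • toE ω
      + (1/24 : ℝ) • toE (fun p : ZMod Nx × ZMod Ny => ω (p.1, p.2 + 1))
      + (1/24 : ℝ) • toE (fun p : ZMod Nx × ZMod Ny => ω (p.1, p.2 + (-1))) := by
  ext p
  simp only [toE, WithLp.equiv_symm_apply, PiLp.toLp_apply, PiLp.add_apply, PiLp.smul_apply, smul_eq_mul,
    opLy, dyy, sub_eq_add_neg]
  field_simp
  ring

lemma opLx_norm_bounds (hx : ℝ) (hhx : hx ≠ 0) (ω : GridFn Nx Ny) :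
    5/6 * ‖toE ω‖ ≤ ‖toE (opLx hx ω)‖ ∧ ‖toE (opLx hx ω)‖ ≤ ‖toE ω‖ := by
  rw [toE_opLx hx hhx]
  set A := (11/12 : ℝ) • toE ω with hA
  set B := (1/24 : ℝ) • toE (fun p : ZMod Nx × ZMod Ny => ω (p.1 + 1, p.2)) with hB
  set C := (1/24 : ℝ) • toE (fun p : ZMod Nx × ZMod Ny => ω (p.1 + (-1), p.2)) with hC
  have hAn : ‖A‖ = 11/12 * ‖toE ω‖ := by
    rw [hA, norm_smul, Real.norm_eq_abs]; norm_num
  have hBn : ‖B‖ = 1/24 * ‖toE ω‖ := by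
    rw [hB, norm_smul, Real.norm_eq_abs, norm_shiftx]; norm_num
  have hCn : ‖C‖ = 1/24 * ‖toE ω‖ := by
    rw [hC, norm_smul, Real.norm_eq_abs, norm_shiftx]; norm_num
  have htri : ‖A + B + C‖ ≤ ‖A‖ + ‖B‖ + ‖C‖ :=
    (norm_add_le _ _).trans (by linarith [norm_add_le A B])
  have hlow : ‖A‖ ≤ ‖A + B + C‖ + ‖B‖ + ‖C‖ := by
    have : ‖A‖ = ‖(A + B + C) + (-B + -C)‖ := by congr 1; abel
    rw [this]
    calc ‖(A + B + C) + (-B + -C)‖ ≤ ‖A + B + C‖ + ‖-B + -C‖ := norm_add_le _ _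
      _ ≤ ‖A + B + C‖ + (‖(-B:EuclideanSpace ℝ (ZMod Nx × ZMod Ny))‖ + ‖-C‖) := by
          linarith [norm_add_le (-B) (-C)]
      _ = ‖A + B + C‖ + ‖B‖ + ‖C‖ := by rw [norm_neg, norm_neg]; ring
  constructor <;> [skip; skip] <;> linarith [hAn, hBn, hCn]

lemma opLy_norm_bounds (hy : ℝ) (hhy : hy ≠ 0) (ω : GridFn Nx Ny) :
    5/6 * ‖toE ω‖ ≤ ‖toE (opLy hy ω)‖ ∧ ‖toE (opLy hy ω)‖ ≤ ‖toE ω‖ := by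
  rw [toE_opLy hy hhy]
  set A := (11/12 : ℝ) • toE ω with hA
  set B := (1/24 : ℝ) • toE (fun p : ZMod Nx × ZMod Ny => ω (p.1, p.2 + 1)) with hB
  set C := (1/24 : ℝ) • toE (fun p : ZMod Nx × ZMod Ny => ω (p.1, p.2 + (-1))) with hC
  have hAn : ‖A‖ = 11/12 * ‖toE ω‖ := by
    rw [hA, norm_smul, Real.norm_eq_abs]; norm_num
  have hBn : ‖B‖ = 1/24 * ‖toE ω‖ := by
    rw [hB, norm_smul, Real.norm_eq_abs, norm_shifty]; norm_num
  have hCn : ‖C‖ = 1/24 * ‖toE ω‖ := by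
    rw [hC, norm_smul, Real.norm_eq_abs, norm_shifty]; norm_num
  have htri : ‖A + B + C‖ ≤ ‖A‖ + ‖B‖ + ‖C‖ :=
    (norm_add_le _ _).trans (by linarith [norm_add_le A B])
  have hlow : ‖A‖ ≤ ‖A + B + C‖ + ‖B‖ + ‖C‖ := by
    have : ‖A‖ = ‖(A + B + C) + (-B + -C)‖ := by congr 1; abel
    rw [this]
    calc ‖(A + B + C) + (-B + -C)‖ ≤ ‖A + B + C‖ + ‖-B + -C‖ := norm_add_le _ _
      _ ≤ ‖A + B + C‖ + (‖(-B:EuclideanSpace ℝ (ZMod Nx × ZMod Ny))‖ + ‖-C‖) := by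
          linarith [norm_add_le (-B) (-C)]
      _ = ‖A + B + C‖ + ‖B‖ + ‖C‖ := by rw [norm_neg, norm_neg]; ring
  constructor <;> [skip; skip] <;> linarith [hAn, hBn, hCn]

lemma gnorm_eq (hx hy : ℝ) (h : 0 ≤ hx * hy) (ω : GridFn Nx Ny) :
    gnorm hx hy ω = Real.sqrt (hx * hy) * ‖toE ω‖ := by
  rw [gnorm, gip, toE_norm, ← Real.sqrt_mul h]
  congr 1
  rw [Finset.mul_sum]
  refine Finset.sum_congr rfl fun p _ => ?_
  ring

/-- `ℒ` as a linear map. -/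
noncomputable def opLLlin (hx hy : ℝ) : GridFn Nx Ny →ₗ[ℝ] GridFn Nx Ny where
  toFun := opLL hx hy
  map_add' := by
    intro ω σ
    funext p
    simp only [opLL, opLx, opLy, dxx, dyy, Pi.add_apply]
    ring
  map_smul' := by
    intro c ω
    funext p
    simp only [opLL, opLx, opLy, dxx, dyy, Pi.smul_apply, smul_eq_mul, RingHom.id_apply]
    ring

end Aux

/-- **Lemma 3.3 for `ℒ = L_x ∘ L_y`.**  `(11/16)²·‖ω‖ ≤ ‖ℒω‖ ≤ ‖ω‖`, hence `ℒ`
is bijective (equivalently `‖ℒω‖ ≤ ‖ω‖ ≤ ‖ℒ⁻¹ω‖ ≤ (16/11)²·‖ω‖`). -/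
theorem compact_op_LL_bounds [NeZero Nx] [NeZero Ny]
    (hx hy : ℝ) (hhx : 0 < hx) (hhy : 0 < hy) :
    (∀ ω : GridFn Nx Ny,
      (11 / 16) ^ 2 * gnorm hx hy ω ≤ gnorm hx hy (opLL hx hy ω) ∧
      gnorm hx hy (opLL hx hy ω) ≤ gnorm hx hy ω) ∧
    Function.Bijective (opLL hx hy : GridFn Nx Ny → GridFn Nx Ny) := by
  have hxy : 0 ≤ hx * hy := le_of_lt (mul_pos hhx hhy)
  have hc : 0 < Real.sqrt (hx * hy) := Real.sqrt_pos.mpr (mul_pos hhx hhy)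
  have key : ∀ ω : GridFn Nx Ny,
      (11 / 16) ^ 2 * gnorm hx hy ω ≤ gnorm hx hy (opLL hx hy ω) ∧
      gnorm hx hy (opLL hx hy ω) ≤ gnorm hx hy ω := by
    intro ω
    have h1 := opLy_norm_bounds (Nx := Nx) hy hhy.ne' ω
    have h2 := opLx_norm_bounds (Ny := Ny) hx hhx.ne' (opLy hy ω)
    have hnn : (0:ℝ) ≤ ‖toE ω‖ := norm_nonneg _
    have hEl : (11/16 : ℝ) ^ 2 * ‖toE ω‖ ≤ ‖toE (opLL hx hy ω)‖ := by
      have : (11/16 : ℝ) ^ 2 * ‖toE ω‖ ≤ 5/6 * (5/6 * ‖toE ω‖) := by nlinarith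
      calc (11/16 : ℝ) ^ 2 * ‖toE ω‖ ≤ 5/6 * (5/6 * ‖toE ω‖) := this
        _ ≤ 5/6 * ‖toE (opLy hy ω)‖ := by linarith [h1.1]
        _ ≤ ‖toE (opLx hx (opLy hy ω))‖ := h2.1
        _ = ‖toE (opLL hx hy ω)‖ := rfl
    have hEu : ‖toE (opLL hx hy ω)‖ ≤ ‖toE ω‖ := by
      calc ‖toE (opLL hx hy ω)‖ = ‖toE (opLx hx (opLy hy ω))‖ := rfl
        _ ≤ ‖toE (opLy hy ω)‖ := h2.2
        _ ≤ ‖toE ω‖ := h1.2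
    rw [gnorm_eq hx hy hxy, gnorm_eq hx hy hxy]
    constructor
    · calc (11/16 : ℝ) ^ 2 * (Real.sqrt (hx*hy) * ‖toE ω‖)
          = Real.sqrt (hx*hy) * ((11/16 : ℝ) ^ 2 * ‖toE ω‖) := by ring
        _ ≤ Real.sqrt (hx*hy) * ‖toE (opLL hx hy ω)‖ :=
            mul_le_mul_of_nonneg_left hEl hc.le
    · exact mul_le_mul_of_nonneg_left hEu hc.le
  refine ⟨key, ?_⟩
  have hinj : Function.Injective (opLLlin (Nx := Nx) (Ny := Ny) hx hy) := by
    rw [injective_iff_map_eq_zero]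
    intro ω hω
    have h0 : gnorm hx hy (opLL hx hy ω) = 0 := by
      have : opLL hx hy ω = 0 := hω
      rw [this, gnorm, gip]
      simp
    have hlow := (key ω).1
    rw [h0] at hlow
    have hgnn : 0 ≤ gnorm hx hy ω := Real.sqrt_nonneg _
    have hg0 : gnorm hx hy ω = 0 := by nlinarith
    rw [gnorm_eq hx hy hxy] at hg0
    have : ‖toE ω‖ = 0 := by
      rcases mul_eq_zero.mp hg0 with h | h
      · exact absurd h hc.ne'
      · exact h
    have : toE ω = 0 := norm_eq_zero.mp this
    funext p
    have := congrFun (congrArg (WithLp.equiv 2 _) this) p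
    simpa [toE] using this
  exact ⟨hinj, LinearMap.injective_iff_surjective.mp hinj⟩
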